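/- For a finite set of at least 3 points in the Euclidean plane not all collinear, every point of the set lying in the interior of the convex hull is at positive distance from the set of extreme points (vertices) of the convex hull, and moving such a point to its nearest extreme point strictly decreases the sum over all points of the distance to the nearest extreme point, while leaving the convex hull unchanged. -/

import Mathlib

open scoped Classical

open Metric

/-- Moving an interior point of a finite planar configuration towards its nearest
extreme point (vertex of the convex hull) keeps the hull unchanged (as long as
the new position is interior or a vertex) and strictly decreases the sum of
distances to the nearest vertices; moreover the interior point is at positive
distance from the vertex set. -/
theorem stmt2 (S : Finset (EuclideanSpace ℝ (Fin 2))) (h3 : 3 ≤ S.card)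
    (hnc : ¬ Collinear ℝ (S : Set (EuclideanSpace ℝ (Fin 2))))
    (V : Set (EuclideanSpace ℝ (Fin 2)))
    (hV : V = Set.extremePoints ℝ (convexHull ℝ (S : Set (EuclideanSpace ℝ (Fin 2)))))
    (p : EuclideanSpace ℝ (Fin 2)) (hp : p ∈ S)
    (hint : p ∈ interior (convexHull ℝ (S : Set (EuclideanSpace ℝ (Fin 2)))))
    (nv : EuclideanSpace ℝ (Fin 2)) (hnv : nv ∈ V)
    (hnear : ∀ w ∈ V, dist p nv ≤ dist p w) :
    0 < infDist p V ∧
    ∀ p' ∈ segment ℝ p nv, p' ≠ p →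
      (p' ∈ interior (convexHull ℝ (S : Set (EuclideanSpace ℝ (Fin 2)))) ∨ p' ∈ V) →
      (convexHull ℝ (insert p' ((S : Set (EuclideanSpace ℝ (Fin 2))) \ {p}))
          = convexHull ℝ (S : Set (EuclideanSpace ℝ (Fin 2))) ∧
        infDist p' V + ∑ q ∈ S.erase p, infDist q V < ∑ q ∈ S, infDist q V) := by
  set K := convexHull ℝ (S : Set (EuclideanSpace ℝ (Fin 2))) with hKdef
  have hconv : Convex ℝ K := convex_convexHull _ _
  have hSfin : (S : Set (EuclideanSpace ℝ (Fin 2))).Finite := S.finite_toSet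
  have hcomp : IsCompact K := hSfin.isCompact_convexHull ℝ
  -- extreme points are not interior points
  have hExtNotInt : ∀ x ∈ Set.extremePoints ℝ K, x ∉ interior K := by
    intro x hx hxint
    obtain ⟨ε, hε, hball⟩ := Metric.isOpen_iff.1 isOpen_interior x hxint
    set v : EuclideanSpace ℝ (Fin 2) := (ε / 2) • EuclideanSpace.single (0 : Fin 2) (1 : ℝ) with hv
    have hvnorm : ‖v‖ = ε / 2 := by
      rw [hv, norm_smul, EuclideanSpace.norm_single]
      rw [Real.norm_eq_abs, abs_of_pos (half_pos hε), norm_one, mul_one]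
    have hvne : v ≠ 0 := by
      intro h
      rw [h, norm_zero] at hvnorm
      linarith
    have hy : x + v ∈ K := by
      refine interior_subset (hball ?_)
      simp [Metric.mem_ball, dist_eq_norm, hvnorm, half_lt_self hε]
    have hz : x - v ∈ K := by
      refine interior_subset (hball ?_)
      simp [Metric.mem_ball, dist_eq_norm, hvnorm, half_lt_self hε, norm_neg]
    have hmem : x ∈ openSegment ℝ (x + v) (x - v) := by
      refine ⟨1/2, 1/2, by norm_num, by norm_num, by norm_num, ?_⟩
      module
    have := hx.2 hy hz hmem
    apply hvne
    have : x + v = x + 0 := by rw [add_zero]; exact this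
    exact add_left_cancel this
  have hVne : V.Nonempty := ⟨nv, hnv⟩
  have hnvK : nv ∈ K := by
    rw [hV] at hnv; exact hnv.1
  have hpK : p ∈ K := subset_convexHull ℝ _ hp
  have hpne : p ≠ nv := by
    intro h
    exact hExtNotInt nv (hV ▸ hnv) (h ▸ hint)
  have hdistpos : 0 < dist p nv := dist_pos.2 hpne
  have hinf : infDist p V = dist p nv := by
    refine le_antisymm (infDist_le_dist_of_mem hnv) (le_of_not_gt fun h => ?_)
    obtain ⟨y, hy, hlt⟩ := (infDist_lt_iff hVne).1 h
    exact absurd (hnear y hy) (not_le.2 hlt)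
  refine ⟨by rw [hinf]; exact hdistpos, ?_⟩
  -- hull of S minus p equals hull of S
  have hVS : V ⊆ (S : Set (EuclideanSpace ℝ (Fin 2))) := hV ▸ extremePoints_convexHull_subset
  have hVfin : V.Finite := hSfin.subset hVS
  have hKV : convexHull ℝ V = K := by
    have := closure_convexHull_extremePoints hcomp hconv
    rw [← hV] at this
    rwa [(hVfin.isClosed_convexHull ℝ).closure_eq] at this
  have hVsub : V ⊆ (S : Set (EuclideanSpace ℝ (Fin 2))) \ {p} := by
    intro x hx
    refine ⟨hVS hx, ?_⟩
    simp only [Set.mem_singleton_iff]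
    intro h
    exact hExtNotInt x (hV ▸ hx) (h ▸ hint)
  have hdiffK : convexHull ℝ ((S : Set (EuclideanSpace ℝ (Fin 2))) \ {p}) = K := by
    refine le_antisymm (convexHull_mono Set.diff_subset) ?_
    rw [← hKV]
    exact convexHull_mono hVsub
  intro p' hp' hp'ne _
  have hp'K : p' ∈ K := hconv.segment_subset hpK hnvK hp'
  constructor
  · refine le_antisymm ?_ ?_
    · exact convexHull_min (Set.insert_subset hp'K
        (Set.diff_subset.trans (subset_convexHull ℝ _))) hconv
    · rw [← hdiffK]
      exact convexHull_mono (Set.subset_insert _ _)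
  · rw [← Finset.add_sum_erase S _ hp]
    have hlt : infDist p' V < infDist p V := by
      obtain ⟨a, b, ha, hb, hab, rfl⟩ := hp'
      have ha1 : a ≠ 1 := by
        intro h
        apply hp'ne
        have hb0 : b = 0 := by linarith
        rw [h, hb0]; simp
      have halt : a < 1 := lt_of_le_of_ne (by linarith) ha1
      have hdist : dist (a • p + b • nv) nv = a * dist p nv := by
        rw [dist_eq_norm, dist_eq_norm]
        have : a • p + b • nv - nv = a • (p - nv) := by
          have hb' : b = 1 - a := by linarith
          rw [hb']; module
        rw [this, norm_smul, Real.norm_eq_abs, abs_of_nonneg ha]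
      calc infDist (a • p + b • nv) V ≤ dist (a • p + b • nv) nv :=
            infDist_le_dist_of_mem hnv
        _ = a * dist p nv := hdist
        _ < 1 * dist p nv := by
            exact mul_lt_mul_of_pos_right halt hdistpos
        _ = dist p nv := one_mul _
        _ = infDist p V := hinf.symm
    linarith
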